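/- If s is a Bosbach state on a bounded pseudo-hoop A, then Ker(s) = {x ∈ A : s(x) = 1} is an involutive filter of A. -/
import Mathlib


universe u v

class PseudoHoop (A : Type u) extends One A, Mul A where
  rimp : A → A → A
  limp : A → A → A
  mul_one' : ∀ x : A, x * 1 = x
  one_mul' : ∀ x : A, 1 * x = x
  rimp_self : ∀ x : A, rimp x x = 1
  limp_self : ∀ x : A, limp x x = 1
  mul_rimp : ∀ x y z : A, rimp (x * y) z = rimp x (rimp y z)
  mul_limp : ∀ x y z : A, limp (x * y) z = limp y (limp x z)
  div₁ : ∀ x y : A, (rimp x y) * x = (rimp y x) * y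
  div₂ : ∀ x y : A, (rimp x y) * x = x * (limp x y)
  div₃ : ∀ x y : A, x * (limp x y) = y * (limp y x)

namespace PseudoHoop

/-- The order on a pseudo-hoop: `x ≤ y` iff `x → y = 1`. -/
def ple {A : Type u} [PseudoHoop A] (x y : A) : Prop := rimp x y = 1

/-- The meet `x ∧ y = (x → y) ⊙ x`. -/
def meet {A : Type u} [PseudoHoop A] (x y : A) : A := (rimp x y) * x

/-- `x ∨₁ y = (x → y) ⇝ y`. -/
def join₁ {A : Type u} [PseudoHoop A] (x y : A) : A := limp (rimp x y) y

/-- `x ∨₂ y = (x ⇝ y) → y`. -/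
def join₂ {A : Type u} [PseudoHoop A] (x y : A) : A := rimp (limp x y) y

/-- Iterated implication: `x →⁰ y = y`, `x →ⁿ⁺¹ y = x → (x →ⁿ y)`. -/
def rimpPow {A : Type u} [PseudoHoop A] (x : A) : ℕ → A → A
  | 0, y => y
  | n + 1, y => rimp x (rimpPow x n y)

/-- A filter of a pseudo-hoop. -/
structure IsFilter {A : Type u} [PseudoHoop A] (F : Set A) : Prop where
  nonempty : F.Nonempty
  mul_mem : ∀ {x y : A}, x ∈ F → y ∈ F → x * y ∈ F
  upward : ∀ {x y : A}, x ∈ F → ple x y → y ∈ F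

/-- A normal filter: `x → y ∈ F` iff `x ⇝ y ∈ F`. -/
def IsNormalFilter {A : Type u} [PseudoHoop A] (F : Set A) : Prop :=
  IsFilter F ∧ ∀ x y : A, rimp x y ∈ F ↔ limp x y ∈ F

def IsProper {A : Type u} [PseudoHoop A] (F : Set A) : Prop := F ≠ Set.univ

/-- A pseudo-hoop is simple if `{1}` is its unique proper filter. -/
def IsSimple (A : Type u) [PseudoHoop A] : Prop :=
  ∀ F : Set A, IsFilter F → IsProper F → F = {1}

/-- A pseudo-hoop is Wajsberg if `x ∨₁ y = y ∨₁ x` and `x ∨₂ y = y ∨₂ x`. -/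
def IsWajsberg (A : Type u) [PseudoHoop A] : Prop :=
  ∀ x y : A, join₁ x y = join₁ y x ∧ join₂ x y = join₂ y x

/-- A fantastic filter. -/
def IsFantasticFilter {A : Type u} [PseudoHoop A] (F : Set A) : Prop :=
  IsFilter F ∧ ∀ x y : A,
    (rimp y x ∈ F → rimp (join₁ x y) x ∈ F) ∧
    (limp y x ∈ F → limp (join₂ x y) x ∈ F)

def IS₂ {A : Type u} [PseudoHoop A] (μ : A → A) : Prop :=
  ∀ x y : A, μ (x * y) = μ x * μ (limp x (x * y)) ∧
    μ (x * y) = μ (rimp y (x * y)) * μ y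

def IS₃ {A : Type u} [PseudoHoop A] (μ : A → A) : Prop :=
  ∀ x y : A, μ (μ x * μ y) = μ x * μ y

def IS₄ {A : Type u} [PseudoHoop A] (μ : A → A) : Prop :=
  ∀ x y : A, μ (rimp (μ x) (μ y)) = rimp (μ x) (μ y) ∧
    μ (limp (μ x) (μ y)) = limp (μ x) (μ y)

/-- Type I state operator. -/
def IsStateI {A : Type u} [PseudoHoop A] (μ : A → A) : Prop :=
  (∀ x y : A, μ (rimp x y) = rimp (μ (join₁ x y)) (μ y) ∧
      μ (limp x y) = limp (μ (join₂ x y)) (μ y)) ∧ IS₂ μ ∧ IS₃ μ ∧ IS₄ μ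

/-- Type II state operator. -/
def IsStateII {A : Type u} [PseudoHoop A] (μ : A → A) : Prop :=
  (∀ x y : A, μ (rimp x y) = rimp (μ (join₁ y x)) (μ y) ∧
      μ (limp x y) = limp (μ (join₂ y x)) (μ y)) ∧ IS₂ μ ∧ IS₃ μ ∧ IS₄ μ

/-- Type III state operator. -/
def IsStateIII {A : Type u} [PseudoHoop A] (μ : A → A) : Prop :=
  (∀ x y : A, μ (rimp x y) = rimp (μ x) (μ (meet x y)) ∧
      μ (limp x y) = limp (μ x) (μ (meet x y))) ∧ IS₂ μ ∧ IS₃ μ ∧ IS₄ μ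

end PseudoHoop

open PseudoHoop

/-- A bounded pseudo-hoop: a pseudo-hoop with a least element `0`. -/
class BoundedPseudoHoop (A : Type u) extends PseudoHoop A, Zero A where
  zero_le : ∀ x : A, rimp 0 x = 1

namespace BoundedPseudoHoop

/-- `x⁻ = x → 0`. -/
def negr {A : Type u} [BoundedPseudoHoop A] (x : A) : A := rimp x 0

/-- `x∼ = x ⇝ 0`. -/
def negl {A : Type u} [BoundedPseudoHoop A] (x : A) : A := limp x 0

/-- A bounded pseudo-hoop is good if `x⁻∼ = x∼⁻` for all `x`. -/
def IsGood (A : Type u) [BoundedPseudoHoop A] : Prop :=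
  ∀ x : A, negl (negr x) = negr (negl x)

/-- A bounded pseudo-hoop is involutive if `x⁻∼ = x∼⁻ = x` for all `x`. -/
def IsInvolutive (A : Type u) [BoundedPseudoHoop A] : Prop :=
  ∀ x : A, negl (negr x) = x ∧ negr (negl x) = x

/-- The set of dense elements. -/
def Den (A : Type u) [BoundedPseudoHoop A] : Set A :=
  {x : A | negl (negr x) = 1}

/-- An involutive filter: `x⁻∼ → x ∈ F` and `x∼⁻ ⇝ x ∈ F` for all `x`. -/
def IsInvolutiveFilter {A : Type u} [BoundedPseudoHoop A] (F : Set A) : Prop :=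
  IsFilter F ∧ ∀ x : A, rimp (negl (negr x)) x ∈ F ∧ limp (negr (negl x)) x ∈ F

end BoundedPseudoHoop

open BoundedPseudoHoop

section Aux

variable {A : Type u} [PseudoHoop A]

private lemma aux_rimp_f (x : A) : rimp x (rimp 1 x) = 1 := by
  have := PseudoHoop.mul_rimp x 1 x
  rw [PseudoHoop.mul_one'] at this
  rw [← this, PseudoHoop.rimp_self]

private lemma aux_rimp_f' (x : A) : rimp (rimp 1 x) x = 1 := by
  calc rimp (rimp 1 x) x = rimp (rimp 1 x * 1) x := by rw [PseudoHoop.mul_one']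
    _ = rimp (rimp 1 x) (rimp 1 x) := PseudoHoop.mul_rimp _ _ _
    _ = 1 := PseudoHoop.rimp_self _

private lemma aux_rimp_one_left (x : A) : rimp 1 x = x := by
  have h := PseudoHoop.div₁ x (rimp 1 x)
  rw [aux_rimp_f, aux_rimp_f', PseudoHoop.one_mul', PseudoHoop.one_mul'] at h
  exact h.symm

private lemma aux_rimp_one_right (x : A) : rimp x 1 = 1 := by
  have hm : rimp x 1 * x = x := by
    rw [PseudoHoop.div₁, PseudoHoop.mul_one', aux_rimp_one_left]
  calc rimp x 1 = rimp (rimp x 1 * x) 1 := by rw [hm]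
    _ = rimp (rimp x 1) (rimp x 1) := PseudoHoop.mul_rimp _ _ _
    _ = 1 := PseudoHoop.rimp_self _

private lemma aux_limp_one_left (x : A) : limp 1 x = x := by
  have h := PseudoHoop.div₂ 1 x
  rw [aux_rimp_one_left, PseudoHoop.mul_one', PseudoHoop.one_mul'] at h
  exact h.symm

private lemma aux_limp_one_right (x : A) : limp x 1 = 1 := by
  have hm : x * limp x 1 = x := by
    rw [PseudoHoop.div₃, PseudoHoop.one_mul', aux_limp_one_left]
  calc limp x 1 = limp (x * limp x 1) 1 := by rw [hm]
    _ = limp (limp x 1) (limp x 1) := PseudoHoop.mul_limp _ _ _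
    _ = 1 := PseudoHoop.limp_self _

private lemma aux_limp_to_rimp {x y : A} (h : limp x y = 1) : rimp x y = 1 := by
  have hm : rimp x y * x = x := by
    rw [PseudoHoop.div₂, h, PseudoHoop.mul_one']
  calc rimp x y = rimp (rimp x y * x) y := by rw [hm]
    _ = rimp (rimp x y) (rimp x y) := PseudoHoop.mul_rimp _ _ _
    _ = 1 := PseudoHoop.rimp_self _

private lemma aux_rimp_to_limp {x y : A} (h : rimp x y = 1) : limp x y = 1 := by
  have hm : x * limp x y = x := by
    rw [← PseudoHoop.div₂, h, PseudoHoop.one_mul']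
  calc limp x y = limp (x * limp x y) y := by rw [hm]
    _ = limp (limp x y) (limp x y) := PseudoHoop.mul_limp _ _ _
    _ = 1 := PseudoHoop.limp_self _

end Aux

section AuxB

variable {A : Type u} [BoundedPseudoHoop A]

private lemma aux_limp_zero (x : A) : limp 0 x = 1 :=
  aux_rimp_to_limp (BoundedPseudoHoop.zero_le x)

private lemma aux_negr_mul (x : A) : rimp x 0 * x = 0 := by
  rw [PseudoHoop.div₁, BoundedPseudoHoop.zero_le, PseudoHoop.one_mul']

private lemma aux_mul_negl (x : A) : x * limp x 0 = 0 := by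
  rw [← PseudoHoop.div₂, aux_negr_mul]

private lemma aux_le_nn (x : A) : limp x (negl (negr x)) = 1 := by
  show limp x (limp (rimp x 0) 0) = 1
  rw [← PseudoHoop.mul_limp, aux_negr_mul, PseudoHoop.limp_self]

private lemma aux_le_nn' (x : A) : rimp x (negr (negl x)) = 1 := by
  show rimp x (rimp (limp x 0) 0) = 1
  rw [← PseudoHoop.mul_rimp, aux_mul_negl, PseudoHoop.rimp_self]

private lemma aux_rimp_le_nn (x : A) : rimp x (negl (negr x)) = 1 :=
  aux_limp_to_rimp (aux_le_nn x)

private lemma aux_limp_le_nn' (x : A) : limp x (negr (negl x)) = 1 :=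
  aux_rimp_to_limp (aux_le_nn' x)

end AuxB

theorem stmt17 {A : Type u} [BoundedPseudoHoop A] (s : A → ℝ)
    (hmem : ∀ x : A, s x ∈ Set.Icc (0 : ℝ) 1)
    (h0 : s 0 = 0) (h1 : s 1 = 1)
    (h2 : ∀ x y : A, s x + s (rimp x y) = s y + s (rimp y x))
    (h3 : ∀ x y : A, s x + s (limp x y) = s y + s (limp y x)) :
    IsInvolutiveFilter {x : A | s x = 1} := by
  have hb : ∀ x : A, 0 ≤ s x ∧ s x ≤ 1 := fun x => (hmem x : _)
  -- s x + s (x⁻) = 1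
  have snegr : ∀ x : A, s x + s (negr x) = 1 := by
    intro x
    have := h2 x 0
    rw [BoundedPseudoHoop.zero_le, h0, h1] at this
    simpa [negr] using this
  -- s x + s (x∼) = 1
  have snegl : ∀ x : A, s x + s (negl x) = 1 := by
    intro x
    have := h3 x 0
    rw [aux_limp_zero, h0, h1] at this
    simpa [negl] using this
  have snn : ∀ x : A, s (negl (negr x)) = s x := by
    intro x
    have a := snegr x
    have b := snegl (negr x)
    linarith
  have snn' : ∀ x : A, s (negr (negl x)) = s x := by
    intro x
    have a := snegl x
    have b := snegr (negl x)
    linarith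
  refine ⟨⟨⟨1, h1⟩, ?_, ?_⟩, ?_⟩
  · -- mul_mem
    intro x y hx hy
    have hx : s x = 1 := hx
    have hy : s y = 1 := hy
    have key : rimp x (rimp y (x * y)) = 1 := by
      rw [← PseudoHoop.mul_rimp, PseudoHoop.rimp_self]
    have e1 := h2 x (rimp y (x * y))
    rw [key, h1, hx] at e1
    have b1 := hb (rimp y (x * y))
    have b2 := hb (rimp (rimp y (x * y)) x)
    have hs1 : s (rimp y (x * y)) = 1 := by linarith
    have e2 := h2 y (x * y)
    rw [hs1, hy] at e2
    have b3 := hb (x * y)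
    have b4 := hb (rimp (x * y) y)
    show s (x * y) = 1
    linarith
  · -- upward
    intro x y hx hxy
    have hx : s x = 1 := hx
    have e := h2 x y
    rw [hxy, h1, hx] at e
    have b1 := hb y
    have b2 := hb (rimp y x)
    show s y = 1
    linarith
  · -- involutive
    intro x
    constructor
    · have e := h2 (negl (negr x)) x
      rw [aux_rimp_le_nn, h1, snn] at e
      show s (rimp (negl (negr x)) x) = 1
      linarith
    · have e := h3 (negr (negl x)) x
      rw [aux_limp_le_nn', h1, snn'] at e
      show s (limp (negr (negl x)) x) = 1
      linarith
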